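/- Every traceless complex square matrix is unitarily similar to a hollow matrix, i.e., if A is an n×n complex matrix with trace zero, then there exists a unitary matrix U such that all diagonal entries of U* A U vanish. -/

import Mathlib

open Matrix Finset Complex

private lemma sum_pair' {n : ℕ} {i j : Fin n} (hij : i ≠ j) (f : Fin n → ℂ)
    (hf : ∀ m, m ≠ i → m ≠ j → f m = 0) : ∑ m, f m = f i + f j := by
  rw [← Finset.sum_pair hij]
  refine (Finset.sum_subset (Finset.subset_univ _) (fun m _ hm => ?_)).symm
  simp only [Finset.mem_insert, Finset.mem_singleton, not_or] at hm
  exact hf m hm.1 hm.2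

private lemma exists_phase (b c z : ℂ) (hz : z ≠ 0) :
    ∃ (ψ r : ℝ), Complex.exp (ψ * I) * b + Complex.exp (-(ψ * I)) * c = (r : ℝ) * z := by
  set h : ℝ → ℝ := fun ψ =>
    ((Complex.exp (ψ * I) * b + Complex.exp (-(ψ * I)) * c) * (starRingEnd ℂ) z).im with hh
  have hcont : Continuous h := by
    apply Complex.continuous_im.comp
    fun_prop
  have e1 : Complex.exp ((Real.pi : ℂ) * I) = -1 := Complex.exp_pi_mul_I
  have e2 : Complex.exp (-((Real.pi : ℂ) * I)) = -1 := by
    rw [Complex.exp_neg, e1]; norm_num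
  have hpi : h Real.pi = - h 0 := by
    simp only [hh, Complex.ofReal_zero, zero_mul, neg_zero, Complex.exp_zero, one_mul, e1, e2]
    have : ((-1) * b + (-1) * c) * (starRingEnd ℂ) z = -((1*b + 1*c) * (starRingEnd ℂ) z) := by ring
    rw [this, Complex.neg_im]
    ring_nf
  have hex : ∃ ψ, h ψ = 0 := by
    rcases le_total (h 0) 0 with h0 | h0
    · have : (0:ℝ) ∈ Set.Icc (h 0) (h Real.pi) := ⟨h0, by rw [hpi]; linarith⟩
      have := intermediate_value_Icc Real.pi_pos.le hcont.continuousOn this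
      obtain ⟨ψ, _, hψ⟩ := this
      exact ⟨ψ, hψ⟩
    · have : (0:ℝ) ∈ Set.Icc (h Real.pi) (h 0) := ⟨by rw [hpi]; linarith, h0⟩
      have := intermediate_value_Icc' Real.pi_pos.le hcont.continuousOn this
      obtain ⟨ψ, _, hψ⟩ := this
      exact ⟨ψ, hψ⟩
  obtain ⟨ψ, hψ⟩ := hex
  set w : ℂ := Complex.exp (ψ * I) * b + Complex.exp (-(ψ * I)) * c with hwdef
  have him : (w * (starRingEnd ℂ) z).im = 0 := hψ
  refine ⟨ψ, (w * (starRingEnd ℂ) z).re / Complex.normSq z, ?_⟩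
  have hns : (Complex.normSq z : ℂ) ≠ 0 := by
    exact_mod_cast (Complex.normSq_pos.mpr hz).ne'
  have h1 : w * (starRingEnd ℂ) z = ((w * (starRingEnd ℂ) z).re : ℝ) := by
    apply Complex.ext <;> simp [him]
  have h2 : w * (Complex.normSq z : ℂ) = ((w * (starRingEnd ℂ) z).re : ℝ) * z := by
    rw [← h1, mul_assoc, mul_comm ((starRingEnd ℂ) z) z, Complex.mul_conj]
  rw [Complex.ofReal_div, div_mul_eq_mul_div, eq_div_iff hns, ← h2]

private lemma exists_angle (r u : ℝ) (h0 : 0 ≤ u) (h1 : u ≤ 1) :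
    ∃ θ : ℝ, Real.cos θ ^ 2 + r * (Real.cos θ * Real.sin θ) = 1 - u := by
  set g : ℝ → ℝ := fun θ => Real.cos θ ^ 2 + r * (Real.cos θ * Real.sin θ) with hg
  have hcont : Continuous g := by fun_prop
  have hga : g 0 = 1 := by simp [hg]
  have hgb : g (Real.pi / 2) = 0 := by simp [hg]
  have : (1 - u) ∈ Set.Icc (g (Real.pi/2)) (g 0) := by
    rw [hga, hgb]; constructor <;> linarith
  have := intermediate_value_Icc' (by positivity : (0:ℝ) ≤ Real.pi/2) hcont.continuousOn this
  obtain ⟨θ, _, hθ⟩ := this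
  exact ⟨θ, hθ⟩

private lemma sum_pair'' {n : ℕ} {i j : Fin n} (hij : i ≠ j) (f : Fin n → ℂ)
    (hf : ∀ m, m ≠ i → m ≠ j → f m = 0) : ∑ m, f m = f i + f j := by
  rw [← Finset.sum_pair hij]
  refine (Finset.sum_subset (Finset.subset_univ _) (fun m _ hm => ?_)).symm
  simp only [Finset.mem_insert, Finset.mem_singleton, not_or] at hm
  exact hf m hm.1 hm.2

private def rotMat {n : ℕ} (i j : Fin n) (c s : ℂ) : Matrix (Fin n) (Fin n) ℂ :=
  Matrix.of fun k l =>
    if l = i then (if k = i then c else if k = j then s else 0)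
    else if l = j then (if k = i then -(starRingEnd ℂ) s else if k = j then (starRingEnd ℂ) c else 0)
    else if k = l then 1 else 0

private lemma rotMat_apply {n : ℕ} (i j : Fin n) (c s : ℂ) (k l : Fin n) :
    rotMat i j c s k l =
    if l = i then (if k = i then c else if k = j then s else 0)
    else if l = j then (if k = i then -(starRingEnd ℂ) s else if k = j then (starRingEnd ℂ) c else 0)
    else if k = l then 1 else 0 := rfl

private lemma rotMat_unitary {n : ℕ} (i j : Fin n) (hij : i ≠ j) (c s : ℂ)
    (h : (starRingEnd ℂ) c * c + (starRingEnd ℂ) s * s = 1) :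
    rotMat i j c s ∈ Matrix.unitaryGroup (Fin n) ℂ := by
  rw [Matrix.mem_unitaryGroup_iff']
  ext k l
  rw [Matrix.mul_apply, Matrix.one_apply]
  simp only [Matrix.star_apply]
  by_cases hk1 : k = i
  · by_cases hl1 : l = i
    · simp only [hk1, hl1, if_pos rfl]
      rw [sum_pair'' hij (fun m => star (rotMat i j c s m i) * rotMat i j c s m i)
        (fun m hm1 hm2 => by simp [rotMat_apply, hm1, hm2])]
      simp [rotMat_apply, hij, Ne.symm hij, Complex.star_def]
      linear_combination h
    · by_cases hl2 : l = j
      · simp only [hk1, hl2]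
        rw [sum_pair'' hij (fun m => star (rotMat i j c s m i) * rotMat i j c s m j)
          (fun m hm1 hm2 => by simp [rotMat_apply, hm1, hm2])]
        have : ¬ (i = j) := hij
        simp [rotMat_apply, hij, Ne.symm hij, Complex.star_def, this]
        ring
      · simp only [hk1]
        rw [Fintype.sum_eq_single l
          (fun m hm => by simp [rotMat_apply, hl1, hl2, hm])]
        simp [rotMat_apply, hl1, hl2]
        exact fun h' => hl1 h'.symm
  · by_cases hk2 : k = j
    · by_cases hl1 : l = i
      · simp only [hk2, hl1]
        rw [sum_pair'' hij (fun m => star (rotMat i j c s m j) * rotMat i j c s m i)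
          (fun m hm1 hm2 => by simp [rotMat_apply, hm1, hm2])]
        have : ¬ (i = j) := hij
        simp [rotMat_apply, hij, Ne.symm hij, Complex.star_def, this]
        ring
      · by_cases hl2 : l = j
        · simp only [hk2, hl2]
          rw [sum_pair'' hij (fun m => star (rotMat i j c s m j) * rotMat i j c s m j)
            (fun m hm1 hm2 => by simp [rotMat_apply, hm1, hm2])]
          have : ¬ (i = j) := hij
          simp [rotMat_apply, hij, Ne.symm hij, Complex.star_def, this]
          linear_combination h
        · simp only [hk2]
          rw [Fintype.sum_eq_single l
            (fun m hm => by simp [rotMat_apply, hl1, hl2, hm])]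
          simp [rotMat_apply, hl1, hl2]
          exact fun h' => hl2 h'.symm
    · rw [Fintype.sum_eq_single k (fun m hm => by simp [rotMat_apply, hk1, hk2, hm])]
      simp only [rotMat_apply, hk1, hk2, if_neg hk1, if_neg hk2, if_pos rfl, Complex.star_def,
        _root_.map_one, one_mul]
      split_ifs <;> simp_all
private lemma rot_diag_ii {n : ℕ} (A : Matrix (Fin n) (Fin n) ℂ) (i j : Fin n) (hij : i ≠ j)
    (c s : ℂ) :
    ((rotMat i j c s)ᴴ * A * rotMat i j c s) i i =
      (starRingEnd ℂ) c * c * A i i + (starRingEnd ℂ) c * s * A i j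
      + (starRingEnd ℂ) s * c * A j i + (starRingEnd ℂ) s * s * A j j := by
  rw [Matrix.mul_apply]
  rw [sum_pair'' hij (fun l => ((rotMat i j c s)ᴴ * A) i l * rotMat i j c s l i)
    (fun m hm1 hm2 => by simp [rotMat_apply, hm1, hm2])]
  rw [Matrix.mul_apply, Matrix.mul_apply]
  rw [sum_pair'' hij (fun m => (rotMat i j c s)ᴴ i m * A m i)
    (fun m hm1 hm2 => by simp [Matrix.conjTranspose_apply, rotMat_apply, hm1, hm2])]
  rw [sum_pair'' hij (fun m => (rotMat i j c s)ᴴ i m * A m j)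
    (fun m hm1 hm2 => by simp [Matrix.conjTranspose_apply, rotMat_apply, hm1, hm2])]
  simp [Matrix.conjTranspose_apply, rotMat_apply, hij, Ne.symm hij, Complex.star_def]
  ring

private lemma rot_diag_other {n : ℕ} (A : Matrix (Fin n) (Fin n) ℂ) (i j : Fin n) (hij : i ≠ j)
    (c s : ℂ) (k : Fin n) (hk1 : k ≠ i) (hk2 : k ≠ j) :
    ((rotMat i j c s)ᴴ * A * rotMat i j c s) k k = A k k := by
  rw [Matrix.mul_apply]
  rw [Fintype.sum_eq_single k
    (fun m hm => by simp [rotMat_apply, hk1, hk2, hm])]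
  rw [Matrix.mul_apply]
  rw [Fintype.sum_eq_single k
    (fun m hm => by simp [Matrix.conjTranspose_apply, rotMat_apply, hk1, hk2, hm])]
  simp [Matrix.conjTranspose_apply, rotMat_apply, hk1, hk2]
private lemma rotation_step {n : ℕ} (A : Matrix (Fin n) (Fin n) ℂ) (i j : Fin n) (hij : i ≠ j)
    (u : ℝ) (h0 : 0 ≤ u) (h1 : u ≤ 1) :
    ∃ U ∈ Matrix.unitaryGroup (Fin n) ℂ,
      (Uᴴ * A * U) i i = (1 - (u : ℂ)) * A i i + (u : ℂ) * A j j ∧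
      ∀ k, k ≠ i → k ≠ j → (Uᴴ * A * U) k k = A k k := by
  by_cases haa : A i i = A j j
  · refine ⟨1, one_mem _, ?_, ?_⟩
    · simp only [Matrix.conjTranspose_one, Matrix.one_mul, Matrix.mul_one]
      rw [haa]; ring
    · intro k _ _
      simp
  · have hz : A i i - A j j ≠ 0 := sub_ne_zero.mpr haa
    obtain ⟨ψ, r, hw⟩ := exists_phase (A i j) (A j i) (A i i - A j j) hz
    obtain ⟨θ, hθ⟩ := exists_angle r u h0 h1
    set c : ℂ := (Real.cos θ : ℂ) with hc
    set s : ℂ := Complex.exp (ψ * I) * (Real.sin θ : ℂ) with hs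
    have hE : Complex.exp (-(ψ * I)) * Complex.exp (ψ * I) = 1 := by
      rw [← Complex.exp_add, neg_add_cancel, Complex.exp_zero]
    have hconjc : (starRingEnd ℂ) c = c := Complex.conj_ofReal _
    have hconjs : (starRingEnd ℂ) s = Complex.exp (-(ψ * I)) * (Real.sin θ : ℂ) := by
      rw [hs, _root_.map_mul, Complex.conj_ofReal, ← Complex.exp_conj]
      congr 2
      simp [Complex.ext_iff]
    have hcs : (starRingEnd ℂ) c * c + (starRingEnd ℂ) s * s = 1 := by
      rw [hconjc, hconjs, hc, hs]
      have hpyth : (Real.cos θ : ℝ) * Real.cos θ + Real.sin θ * Real.sin θ = 1 := by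
        nlinarith [Real.sin_sq_add_cos_sq θ]
      calc (Real.cos θ : ℂ) * (Real.cos θ : ℂ)
            + Complex.exp (-(ψ * I)) * (Real.sin θ : ℂ) * (Complex.exp (ψ * I) * (Real.sin θ : ℂ))
          = (Real.cos θ : ℂ) * (Real.cos θ : ℂ)
            + (Complex.exp (-(ψ * I)) * Complex.exp (ψ * I)) * ((Real.sin θ : ℂ) * (Real.sin θ : ℂ)) := by
            ring
        _ = ((Real.cos θ * Real.cos θ + Real.sin θ * Real.sin θ : ℝ) : ℂ) := by
            rw [hE]; push_cast; ring
        _ = 1 := by rw [hpyth]; norm_num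
    refine ⟨rotMat i j c s, rotMat_unitary i j hij c s hcs, ?_, fun k hk1 hk2 =>
      rot_diag_other A i j hij c s k hk1 hk2⟩
    rw [rot_diag_ii A i j hij c s, hconjc, hconjs, hc, hs]
    have hθ' : ((Real.cos θ : ℂ))^2 + (r : ℂ) * ((Real.cos θ : ℂ) * (Real.sin θ : ℂ)) = 1 - (u : ℂ) := by
      exact_mod_cast congrArg (fun x : ℝ => (x : ℂ)) hθ
    have hpyth' : ((Real.sin θ : ℂ))^2 + ((Real.cos θ : ℂ))^2 = 1 := by
      exact_mod_cast congrArg (fun x : ℝ => (x : ℂ)) (Real.sin_sq_add_cos_sq θ)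
    linear_combination ((Real.cos θ : ℂ) * (Real.sin θ : ℂ)) * hw
      + ((Real.sin θ : ℂ) * (Real.sin θ : ℂ) * A j j) * hE
      + (A i i - A j j) * hθ' + (A j j) * hpyth'
private lemma sum_split {n : ℕ} (i j : Fin n) (hij : i ≠ j) (f : Fin n → ℂ) :
    ∑ k, f k = f i + f j + ∑ k ∈ (Finset.univ.erase i).erase j, f k := by
  rw [← Finset.add_sum_erase _ f (Finset.mem_univ i),
    ← Finset.add_sum_erase _ f (Finset.mem_erase.mpr ⟨hij.symm, Finset.mem_univ j⟩),
    add_assoc]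

private lemma zeroEntry {n : ℕ} :
    ∀ (m : ℕ) (A : Matrix (Fin n) (Fin n) ℂ) (w : Fin n → ℝ),
      (∀ i, 0 ≤ w i) →
      (Finset.univ.filter (fun i => w i ≠ 0)).card ≤ m →
      (∃ i, w i ≠ 0) →
      (∑ i, (w i : ℂ) * A i i) = 0 →
      ∃ U ∈ Matrix.unitaryGroup (Fin n) ℂ, ∃ i, w i ≠ 0 ∧ (Uᴴ * A * U) i i = 0 ∧
        ∀ k, w k = 0 → (Uᴴ * A * U) k k = A k k := by
  intro m
  induction m with
  | zero =>
    rintro A w hw hcard ⟨i, hi⟩ hz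
    have : i ∈ Finset.univ.filter (fun i => w i ≠ 0) := by simp [hi]
    have := Finset.card_pos.mpr ⟨i, this⟩
    omega
  | succ m ih =>
    rintro A w hw hcard ⟨i, hi⟩ hz
    by_cases hone : ∀ j, j ≠ i → w j = 0
    · have hsum : ∑ k, (w k : ℂ) * A k k = (w i : ℂ) * A i i :=
        Fintype.sum_eq_single i (fun k hk => by rw [hone k hk]; simp)
      rw [hsum] at hz
      have hAii : A i i = 0 := by
        rcases mul_eq_zero.mp hz with h | h
        · exact absurd (Complex.ofReal_eq_zero.mp h) hi
        · exact h
      exact ⟨1, one_mem _, i, hi, by simpa using hAii, fun k _ => by simp⟩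
    · push_neg at hone
      obtain ⟨j, hji, hj⟩ := hone
      have hij : i ≠ j := fun h => hji h.symm
      have hwi : 0 < w i := lt_of_le_of_ne (hw i) (Ne.symm hi)
      have hwj : 0 < w j := lt_of_le_of_ne (hw j) (Ne.symm hj)
      have hwsum : 0 < w i + w j := by linarith
      set u : ℝ := w j / (w i + w j) with hu
      have h0 : 0 ≤ u := div_nonneg hwj.le hwsum.le
      have h1 : u ≤ 1 := by rw [hu, div_le_one hwsum]; linarith
      obtain ⟨U1, hU1, hB1, hBpres⟩ := rotation_step A i j hij u h0 h1
      set B := U1ᴴ * A * U1 with hBdef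
      set w' : Fin n → ℝ := Function.update (Function.update w j 0) i (w i + w j) with hw'def
      have hw'i : w' i = w i + w j := by
        rw [hw'def, Function.update_self]
      have hw'j : w' j = 0 := by
        rw [hw'def, Function.update_of_ne hji, Function.update_self]
      have hw'other : ∀ k, k ≠ i → k ≠ j → w' k = w k := fun k hk1 hk2 => by
        rw [hw'def, Function.update_of_ne hk1, Function.update_of_ne hk2]
      have hw'nonneg : ∀ k, 0 ≤ w' k := by
        intro k
        by_cases hk1 : k = i
        · rw [hk1, hw'i]; linarith
        · by_cases hk2 : k = j
          · rw [hk2, hw'j]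
          · rw [hw'other k hk1 hk2]; exact hw k
      have hsub : Finset.univ.filter (fun k => w' k ≠ 0) ⊆
          (Finset.univ.filter (fun k => w k ≠ 0)).erase j := by
        intro k hk
        simp only [Finset.mem_filter, Finset.mem_univ, true_and] at hk
        rw [Finset.mem_erase]
        have hkj : k ≠ j := fun h => hk (h ▸ hw'j)
        refine ⟨hkj, ?_⟩
        simp only [Finset.mem_filter, Finset.mem_univ, true_and]
        by_cases hki : k = i
        · rw [hki]; exact hi
        · rw [← hw'other k hki hkj]; exact hk
      have hjmem : j ∈ Finset.univ.filter (fun k => w k ≠ 0) := by simp [hj]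
      have hcard' : (Finset.univ.filter (fun k => w' k ≠ 0)).card ≤ m := by
        have h1 := Finset.card_le_card hsub
        have h2 := Finset.card_erase_of_mem hjmem
        have h3 := Finset.card_pos.mpr ⟨j, hjmem⟩
        omega
      have e1 : ((w i : ℂ) + (w j : ℂ)) * (1 - (u : ℂ)) = (w i : ℂ) := by
        have : ((w i + w j) * (1 - u) : ℝ) = w i := by
          rw [hu]; field_simp; ring
        calc ((w i : ℂ) + (w j : ℂ)) * (1 - (u : ℂ))
            = (((w i + w j) * (1 - u) : ℝ) : ℂ) := by push_cast; ring
          _ = (w i : ℂ) := by rw [this]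
      have e2 : ((w i : ℂ) + (w j : ℂ)) * (u : ℂ) = (w j : ℂ) := by
        have : ((w i + w j) * u : ℝ) = w j := by
          rw [hu]; field_simp
        calc ((w i : ℂ) + (w j : ℂ)) * (u : ℂ)
            = (((w i + w j) * u : ℝ) : ℂ) := by push_cast; ring
          _ = (w j : ℂ) := by rw [this]
      have hz' : ∑ k, (w' k : ℂ) * B k k = 0 := by
        rw [sum_split i j hij] at hz ⊢
        have htail : ∑ k ∈ (Finset.univ.erase i).erase j, (w' k : ℂ) * B k k
            = ∑ k ∈ (Finset.univ.erase i).erase j, (w k : ℂ) * A k k := by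
          refine Finset.sum_congr rfl (fun k hk => ?_)
          rw [Finset.mem_erase, Finset.mem_erase] at hk
          rw [hw'other k hk.2.1 hk.1, hBpres k hk.2.1 hk.1]
        rw [htail, hw'i, hw'j, hB1]
        push_cast
        linear_combination hz + A i i * e1 + A j j * e2
      obtain ⟨U2, hU2, k, hk, hk0, hkpres⟩ := ih B w' hw'nonneg hcard'
        ⟨i, by rw [hw'i]; positivity⟩ hz'
      have hkey : (U1 * U2)ᴴ * A * (U1 * U2) = U2ᴴ * B * U2 := by
        rw [Matrix.conjTranspose_mul, hBdef]
        simp only [Matrix.mul_assoc]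
      refine ⟨U1 * U2, mul_mem hU1 hU2, k, ?_, ?_, ?_⟩
      · have hkj : k ≠ j := fun h => hk (h ▸ hw'j)
        by_cases hki : k = i
        · rw [hki]; exact hi
        · rw [← hw'other k hki hkj]; exact hk
      · rw [hkey]; exact hk0
      · intro k' hk'
        have hk'i : k' ≠ i := fun h => by rw [h] at hk'; exact absurd hk' hi
        have hk'j : k' ≠ j := fun h => by rw [h] at hk'; exact absurd hk' hj
        rw [hkey, hkpres k' (by rw [hw'other k' hk'i hk'j]; exact hk'),
          hBpres k' hk'i hk'j]

private lemma hollow_on {n : ℕ} :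
    ∀ (m : ℕ) (A : Matrix (Fin n) (Fin n) ℂ) (S : Finset (Fin n)),
      S.card = m → (∑ i ∈ S, A i i) = 0 →
      ∃ U ∈ Matrix.unitaryGroup (Fin n) ℂ,
        (∀ i ∈ S, (Uᴴ * A * U) i i = 0) ∧ ∀ i ∉ S, (Uᴴ * A * U) i i = A i i := by
  intro m
  induction m with
  | zero =>
    intro A S hS _
    rw [Finset.card_eq_zero] at hS
    subst hS
    exact ⟨1, one_mem _, fun i hi => absurd hi (Finset.notMem_empty i), fun i _ => by simp⟩
  | succ m ih =>
    intro A S hS hsum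
    have hSne : S.Nonempty := Finset.card_pos.mp (by omega)
    obtain ⟨i0, hi0⟩ := hSne
    set w : Fin n → ℝ := fun k => if k ∈ S then 1 else 0 with hwdef
    have hfilter : Finset.univ.filter (fun k => w k ≠ 0) = S := by
      ext k
      simp only [Finset.mem_filter, Finset.mem_univ, true_and, hwdef]
      by_cases hk : k ∈ S <;> simp [hk]
    have hwz : ∑ k, (w k : ℂ) * A k k = 0 := by
      have : ∀ k, (w k : ℂ) * A k k = if k ∈ S then A k k else 0 := by
        intro k
        by_cases hk : k ∈ S <;> simp [hwdef, hk]
      rw [Fintype.sum_congr _ _ this, Finset.sum_ite_mem, Finset.univ_inter]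
      exact hsum
    obtain ⟨U1, hU1, i, hwi, hBi, hBpres⟩ := zeroEntry (m + 1) A w
      (fun k => by rw [hwdef]; dsimp only; split <;> norm_num)
      (le_of_eq (by rw [hfilter, hS]))
      ⟨i0, by simp [hwdef, hi0]⟩ hwz
    have hiS : i ∈ S := by
      by_contra hiS
      exact hwi (by simp [hwdef, hiS])
    set B := U1ᴴ * A * U1 with hBdef
    have hBpres' : ∀ k, k ∉ S → B k k = A k k := by
      intro k hk
      exact hBpres k (by simp [hwdef, hk])
    -- trace invariance
    have htrace : ∑ k, B k k = ∑ k, A k k := by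
      have hmem : U1 * star U1 = 1 := (Matrix.mem_unitaryGroup_iff).mp hU1
      have : (U1ᴴ * A * U1).trace = A.trace := by
        rw [Matrix.trace_mul_comm, ← Matrix.mul_assoc, ← Matrix.star_eq_conjTranspose, hmem,
          Matrix.one_mul]
      simpa [Matrix.trace, Matrix.diag, hBdef] using this
    have hScompl : ∑ k ∈ Sᶜ, B k k = ∑ k ∈ Sᶜ, A k k :=
      Finset.sum_congr rfl (fun k hk => hBpres' k (Finset.mem_compl.mp hk))
    have hSsum : ∑ k ∈ S, B k k = 0 := by
      have h1 := Finset.sum_add_sum_compl S (fun k => B k k)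
      have h2 := Finset.sum_add_sum_compl S (fun k => A k k)
      linear_combination h1 - hScompl + htrace - h2 + hsum
    have hS' : ∑ k ∈ S.erase i, B k k = 0 := by
      have h1 : B i i + ∑ x ∈ S.erase i, B x x = ∑ k ∈ S, B k k :=
        Finset.add_sum_erase S (fun k => B k k) hiS
      rw [hSsum, hBi] at h1
      linear_combination h1
    obtain ⟨U2, hU2, hz2, hpres2⟩ := ih B (S.erase i)
      (by rw [Finset.card_erase_of_mem hiS, hS]; rfl) hS'
    have hkey : (U1 * U2)ᴴ * A * (U1 * U2) = U2ᴴ * B * U2 := by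
      rw [Matrix.conjTranspose_mul, hBdef]
      simp only [Matrix.mul_assoc]
    refine ⟨U1 * U2, mul_mem hU1 hU2, ?_, ?_⟩
    · intro k hkS
      rw [hkey]
      by_cases hki : k = i
      · rw [hki, hpres2 i (Finset.notMem_erase i S)]
        exact hBi
      · exact hz2 k (Finset.mem_erase.mpr ⟨hki, hkS⟩)
    · intro k hkS
      have hk' : k ∉ S.erase i := fun h => hkS (Finset.mem_of_mem_erase h)
      rw [hkey, hpres2 k hk', hBpres' k hkS]

theorem traceless_unitarily_similar_to_hollow (n : ℕ)
    (A : Matrix (Fin n) (Fin n) ℂ) (hA : A.trace = 0) :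
    ∃ U ∈ Matrix.unitaryGroup (Fin n) ℂ,
      ∀ i : Fin n, (Uᴴ * A * U) i i = 0 := by
  have hsum : ∑ i, A i i = 0 := by
    simpa [Matrix.trace, Matrix.diag] using hA
  obtain ⟨U, hU, hz, _⟩ := hollow_on (Fintype.card (Fin n)) A Finset.univ
    (by simp) (by simpa using hsum)
  exact ⟨U, hU, fun i => hz i (Finset.mem_univ i)⟩
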